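/- Suppose for nonnegative reals r_0, r_1, …, s_0, s_1, … and constants F > 0, μ ≥ 0 with μF/2 < 1 we have (F/2)s_k ≤ (1 - μF/2)r_k - r_{k+1} + e_k for all k, where the error terms satisfy ∑_{k=0}^K w_k e_k ≤ (F/4)∑_{k=0}^K w_k s_k with w_k = (1-μF/2)^{-(k+1)}. Then (1/W_K)∑_{k=0}^K w_k s_k ≤ 4r_0/(F W_K), where W_K = ∑_{k=0}^K w_k. -/

import Mathlib

/-- Abstract weighted telescoping argument underlying Theorem 2. -/
theorem weighted_telescoping (F μ : ℝ) (hF : 0 < F) (hμ : 0 ≤ μ)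
    (hμF : μ * F / 2 < 1) (r s e : ℕ → ℝ)
    (hr : ∀ k, 0 ≤ r k) (hs : ∀ k, 0 ≤ s k)
    (w : ℕ → ℝ) (hw : ∀ k, w k = ((1 - μ * F / 2)⁻¹) ^ (k + 1))
    (hstep : ∀ k, F / 2 * s k ≤ (1 - μ * F / 2) * r k - r (k + 1) + e k)
    (K : ℕ)
    (herr : ∑ k ∈ Finset.range (K + 1), w k * e k ≤
      F / 4 * ∑ k ∈ Finset.range (K + 1), w k * s k) :
    (1 / ∑ k ∈ Finset.range (K + 1), w k) * ∑ k ∈ Finset.range (K + 1), w k * s k ≤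
      4 * r 0 / (F * ∑ k ∈ Finset.range (K + 1), w k) := by
  set a : ℝ := 1 - μ * F / 2 with ha_def
  have ha : 0 < a := by
    have : 0 ≤ μ * F / 2 := by positivity
    simp only [ha_def]; linarith
  have hainv : 0 < a⁻¹ := inv_pos.mpr ha
  have hwpos : ∀ k, 0 < w k := fun k => by rw [hw]; positivity
  set g : ℕ → ℝ := fun k => (a⁻¹) ^ k * r k with hg_def
  have htel : ∑ k ∈ Finset.range (K + 1), (g k - g (k + 1)) = g 0 - g (K + 1) :=
    Finset.sum_range_sub' g (K + 1)
  have hstep' : ∀ k, w k * (F / 2 * s k) ≤ g k - g (k + 1) + w k * e k := by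
    intro k
    have h := hstep k
    have h2 := mul_le_mul_of_nonneg_left h (le_of_lt (hwpos k))
    have hwa : w k * a = (a⁻¹) ^ k := by
      rw [hw]; field_simp; try (rw [pow_succ]; ring)
      rw [mul_inv_cancel₀ ha.ne', one_mul]
    calc w k * (F / 2 * s k) ≤ w k * (a * r k - r (k + 1) + e k) := h2
      _ = (w k * a) * r k - w k * r (k + 1) + w k * e k := by ring
      _ = g k - g (k + 1) + w k * e k := by
          rw [hwa, hg_def]; simp only [hw, pow_succ]; try ring
  have hsum : F / 2 * ∑ k ∈ Finset.range (K + 1), w k * s k ≤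
      r 0 + ∑ k ∈ Finset.range (K + 1), w k * e k := by
    have h1 : ∑ k ∈ Finset.range (K + 1), w k * (F / 2 * s k) ≤
        ∑ k ∈ Finset.range (K + 1), (g k - g (k + 1) + w k * e k) :=
      Finset.sum_le_sum fun k _ => hstep' k
    rw [Finset.sum_add_distrib, htel] at h1
    have hgK : 0 ≤ g (K + 1) := by
      have := hr (K + 1); positivity
    have hg0 : g 0 = r 0 := by simp [hg_def]
    have h2 : (F / 2) * ∑ k ∈ Finset.range (K + 1), w k * s k =
        ∑ k ∈ Finset.range (K + 1), w k * (F / 2 * s k) := by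
      rw [Finset.mul_sum]; congr 1; ext k; ring
    rw [h2]
    calc ∑ k ∈ Finset.range (K + 1), w k * (F / 2 * s k)
        ≤ g 0 - g (K + 1) + ∑ k ∈ Finset.range (K + 1), w k * e k := h1
      _ ≤ r 0 + ∑ k ∈ Finset.range (K + 1), w k * e k := by rw [hg0]; linarith
  set S := ∑ k ∈ Finset.range (K + 1), w k * s k with hS_def
  set W := ∑ k ∈ Finset.range (K + 1), w k with hW_def
  have hWpos : 0 < W := by
    rw [hW_def]
    apply Finset.sum_pos (fun k _ => hwpos k)
    exact Finset.nonempty_range_iff.mpr (Nat.succ_ne_zero K)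
  have hSle : S ≤ 4 * r 0 / F := by
    rw [le_div_iff₀ hF]
    nlinarith [hsum, herr]
  calc (1 / W) * S = S / W := by ring
    _ ≤ (4 * r 0 / F) / W := by
        gcongr
    _ = 4 * r 0 / (F * W) := by field_simp
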